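/- arXiv:1509.05089 — 3 statements merged into one kernel-verified Lean document; each statement's English description precedes it below -/
import Mathlib

section
/- Let n ≥ 0 and let b_0, b_1, ..., b_{2n+1} be natural numbers satisfying Poincaré duality b_i = b_{2n+1-i} for all 0 ≤ i ≤ 2n+1. Then the secondary Euler characteristic Σ_{i=0}^{2n+1} (-1)^{i-1} · i · b_i is congruent modulo 2 to the Kervaire semi-characteristic Σ_{i=0}^{n} (-1)^i · b_i. -/
open Finset

lemma key_zmod2 (n : ℕ) (b : ℕ → ℕ) (hdual : ∀ i ≤ 2 * n + 1, b i = b (2 * n + 1 - i)) :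
    (∑ i ∈ Finset.range (2 * n + 2), (i : ZMod 2) * (b i : ZMod 2)) =
      ∑ i ∈ Finset.range (n + 1), (b i : ZMod 2) := by
  have hsplit : Finset.range (2 * n + 2) =
      Finset.Ico 0 (n + 1) ∪ Finset.Ico (n + 1) (2 * n + 2) := by
    rw [Finset.Ico_union_Ico_eq_Ico (by omega) (by omega), Finset.range_eq_Ico]
  rw [hsplit, Finset.sum_union (by
    apply Finset.Ico_disjoint_Ico_consecutive)]
  have hrefl : (∑ i ∈ Finset.Ico (n + 1) (2 * n + 2), (i : ZMod 2) * (b i : ZMod 2)) =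
      ∑ j ∈ Finset.Ico 0 (n + 1), ((2 * n + 1 - j : ℕ) : ZMod 2) * (b (2 * n + 1 - j) : ZMod 2) := by
    have := Finset.sum_Ico_reflect (fun i => (i : ZMod 2) * (b i : ZMod 2)) 0
      (n := 2 * n + 1) (m := n + 1) (by omega)
    rw [show 2 * n + 1 + 1 - (n + 1) = n + 1 from by omega,
      show 2 * n + 1 + 1 - 0 = 2 * n + 2 from by omega] at this
    exact this.symm
  rw [hrefl, ← Finset.sum_add_distrib]
  rw [Finset.range_eq_Ico]
  apply Finset.sum_congr rfl
  intro j hj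
  simp only [Finset.mem_Ico] at hj
  rw [← hdual j (by omega)]
  have h1 : ((2 * n + 1 - j : ℕ) : ZMod 2) = 1 + (j : ZMod 2) := by
    have : (2 * n + 1 - j) + j = 2 * n + 1 := by omega
    have h2 : ((2 * n + 1 - j : ℕ) : ZMod 2) + (j : ZMod 2) = ((2 * n + 1 : ℕ) : ZMod 2) := by
      rw [← Nat.cast_add, this]
    have h2z : (2 : ZMod 2) = 0 := by decide
    have h3 : ((2 * n + 1 : ℕ) : ZMod 2) = 1 := by
      push_cast
      rw [h2z]
      ring
    rw [h3] at h2
    linear_combination h2 - (j : ZMod 2) * h2z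
  rw [h1]
  have h2z : (2 : ZMod 2) = 0 := by decide
  linear_combination ((j : ZMod 2) * (b j : ZMod 2)) * h2z

/-- For Betti numbers `b₀, …, b_{2n+1}` satisfying Poincaré duality `bᵢ = b_{2n+1-i}`,
the secondary Euler characteristic `Σᵢ (-1)^(i-1) i bᵢ` is congruent mod 2 to the
Kervaire semi-characteristic `Σ_{i=0}^{n} (-1)^i bᵢ`. -/
theorem secondary_euler_char_eq_kervaire_semicharacteristic_mod_two
    (n : ℕ) (b : ℕ → ℕ) (hdual : ∀ i ≤ 2 * n + 1, b i = b (2 * n + 1 - i)) :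
    (∑ i ∈ Finset.range (2 * n + 2), (-1 : ℤ) ^ (i - 1) * (i : ℤ) * (b i : ℤ)) ≡
      (∑ i ∈ Finset.range (n + 1), (-1 : ℤ) ^ i * (b i : ℤ)) [ZMOD 2] := by
  refine (ZMod.intCast_eq_intCast_iff _ _ 2).mp ?_
  push_cast
  have hneg : (-1 : ZMod 2) = 1 := by decide
  simp only [hneg, one_pow, one_mul]
  exact key_zmod2 n b hdual
end

section
/- For a polynomial P ∈ ℤ[t] with coefficients b_i, define χ_j(P) = Σ_i (-1)^{i-j} · C(i,j) · b_i. Let P, Q ∈ ℤ[t] and let j ≥ 0. If χ_r(P) = 0 and χ_r(Q) = 0 for all 0 ≤ r < j, then χ_{2j}(P·Q) = χ_j(P) · χ_j(Q). -/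
open Polynomial Finset

/-- The `j`-th higher Euler characteristic of an integer polynomial `P = Σ bᵢ tⁱ`:
`χⱼ(P) = Σᵢ (-1)^(i-j) · C(i,j) · bᵢ`. -/
def higherEulerChar (j : ℕ) (P : Polynomial ℤ) : ℤ :=
  ∑ i ∈ Finset.range (P.natDegree + 1), (-1) ^ (i - j) * (i.choose j : ℤ) * P.coeff i

lemma coeff_X_sub_one_pow' (i j : ℕ) :
    ((X - 1 : Polynomial ℤ) ^ i).coeff j = (-1) ^ (i - j) * (i.choose j : ℤ) := by
  rcases le_or_gt j i with h | h
  · have : (X - 1 : Polynomial ℤ) ^ i = ∑ k ∈ range (i + 1),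
        X ^ k * (-1 : Polynomial ℤ) ^ (i - k) * (i.choose k : ℤ[X]) := by
      rw [sub_eq_add_neg]; exact add_pow _ _ _
    rw [this, finset_sum_coeff, Finset.sum_eq_single j]
    · rw [← C_eq_natCast, coeff_mul_C, mul_comm (X ^ j : ℤ[X]), ← C_1, ← C_neg, ← C_pow,
        coeff_C_mul, coeff_X_pow]
      simp
    · intro k hk hkj
      rw [← C_eq_natCast, coeff_mul_C, mul_comm (X ^ k : ℤ[X]), ← C_1, ← C_neg, ← C_pow,
        coeff_C_mul, coeff_X_pow]
      rw [if_neg (by omega)]; ring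
    · intro hj; simp at hj; omega
  · have h1 : ((X - 1 : Polynomial ℤ) ^ i).natDegree < j := by
      calc ((X - 1 : Polynomial ℤ) ^ i).natDegree ≤ i * (X - 1 : Polynomial ℤ).natDegree :=
            natDegree_pow_le
        _ ≤ i := by
            have : (X - 1 : Polynomial ℤ).natDegree ≤ 1 := by
              rw [← C_1]; exact (natDegree_X_sub_C 1).le
            nlinarith
        _ < j := h
    rw [Polynomial.coeff_eq_zero_of_natDegree_lt h1, Nat.choose_eq_zero_of_lt h]
    simp

lemma higherEulerChar_eq (j : ℕ) (P : Polynomial ℤ) :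
    higherEulerChar j P = (P.comp (X - 1)).coeff j := by
  conv_rhs => rw [P.as_sum_range]
  rw [Polynomial.sum_comp]
  simp only [monomial_comp, finset_sum_coeff, coeff_C_mul, coeff_X_sub_one_pow']
  unfold higherEulerChar
  apply Finset.sum_congr rfl
  intro i _
  ring

/-- If `χᵣ(P) = 0` and `χᵣ(Q) = 0` for all `0 ≤ r < j`, then
`χ_{2j}(P·Q) = χⱼ(P)·χⱼ(Q)`. -/
theorem higherEulerChar_mul_two_j (P Q : Polynomial ℤ) (j : ℕ)
    (hP : ∀ r < j, higherEulerChar r P = 0) (hQ : ∀ r < j, higherEulerChar r Q = 0) :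
    higherEulerChar (2 * j) (P * Q) = higherEulerChar j P * higherEulerChar j Q := by
  simp only [higherEulerChar_eq] at *
  rw [mul_comp, coeff_mul, Finset.sum_eq_single (j, j)]
  · rintro ⟨a, b⟩ hab hne
    rw [Finset.HasAntidiagonal.mem_antidiagonal] at hab
    rcases lt_or_ge a j with h | h
    · rw [hP a h, zero_mul]
    · have hb : b < j := by
        rcases Nat.lt_or_ge b j with h' | h'
        · exact h'
        · have ha : a = j := by omega
          have hbj : b = j := by omega
          exact absurd (by rw [ha, hbj]) hne
      rw [hQ b hb, mul_zero]
  · intro h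
    exact absurd (Finset.HasAntidiagonal.mem_antidiagonal.2 (by omega)) h
end

section
/- For a polynomial P ∈ ℤ[t] with coefficients b_i, define χ_j(P) = Σ_i (-1)^{i-j} · C(i,j) · b_i. Let N ∈ ℤ[t], let j ≥ 0, and set P = N · (1+t)^j. Then χ_k(P) = 0 for all 0 ≤ k < j, χ_j(P) = N(-1), and more generally χ_{k+j}(P) = χ_k(N) for all k ≥ 0. -/
open Polynomial Finset

/-- The sum defining `higherEulerChar` can be taken over any sufficiently large range. -/
lemma higherEulerChar_eq_sum_range (k : ℕ) (P : Polynomial ℤ) {n : ℕ}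
    (hn : P.natDegree + 1 ≤ n) :
    higherEulerChar k P =
      ∑ i ∈ Finset.range n, (-1) ^ (i - k) * (i.choose k : ℤ) * P.coeff i := by
  unfold higherEulerChar
  refine Finset.sum_subset (Finset.range_subset_range.2 hn) ?_
  intro i hi hi'
  have : P.natDegree < i := by simpa using hi'
  rw [P.coeff_eq_zero_of_natDegree_lt this, mul_zero]

/-- `higherEulerChar k P` is the `k`-th Taylor coefficient of `P` at `-1`. -/
lemma higherEulerChar_eq_taylor_coeff (k : ℕ) (P : Polynomial ℤ) :
    higherEulerChar k P = (taylor (-1) P).coeff k := by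
  rw [taylor_coeff,
    eval_eq_sum_range' (lt_of_le_of_lt ((natDegree_hasseDeriv_le P k).trans
      (Nat.sub_le _ _)) (Nat.lt_succ_self _)),
    higherEulerChar_eq_sum_range k P (Nat.le_add_left _ k), Finset.sum_range_add]
  have h1 : ∑ i ∈ Finset.range k, (-1) ^ (i - k) * (i.choose k : ℤ) * P.coeff i = 0 := by
    refine Finset.sum_eq_zero fun i hi => ?_
    rw [Nat.choose_eq_zero_of_lt (Finset.mem_range.1 hi)]
    simp
  rw [h1, zero_add]
  refine Finset.sum_congr rfl fun i _ => ?_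
  rw [hasseDeriv_coeff]
  rw [Nat.add_sub_cancel_left, Nat.add_comm k i]
  ring

/-- If `P = N·(1+t)ʲ` then `χₖ(P) = 0` for `k < j`, `χⱼ(P) = N(-1)`, and
`χ_{k+j}(P) = χₖ(N)` for all `k ≥ 0`. -/
theorem higherEulerChar_mul_one_add_X_pow (N P : Polynomial ℤ) (j : ℕ)
    (h : P = N * (1 + X) ^ j) :
    (∀ k < j, higherEulerChar k P = 0) ∧
      higherEulerChar j P = N.eval (-1) ∧
        ∀ k, higherEulerChar (k + j) P = higherEulerChar k N := by
  have hT : taylor (-1) P = taylor (-1) N * X ^ j := by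
    rw [h]
    simp only [taylor_apply, mul_comp, pow_comp, add_comp, one_comp, X_comp, map_neg, map_one]
    ring
  have key : ∀ k, higherEulerChar k P = ((taylor (-1) N) * X ^ j).coeff k := by
    intro k
    rw [higherEulerChar_eq_taylor_coeff, hT]
  have hshift : ∀ k, higherEulerChar (k + j) P = higherEulerChar k N := by
    intro k
    rw [key, coeff_mul_X_pow, higherEulerChar_eq_taylor_coeff]
  refine ⟨fun k hk => ?_, ?_, hshift⟩
  · rw [key, coeff_mul_X_pow', if_neg (by omega)]
  · rw [key, coeff_mul_X_pow', if_pos le_rfl, Nat.sub_self, taylor_coeff_zero]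
end
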